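/- Let B = {|i⟩}_{i=1}^d be an orthonormal basis of ℂ^d with projectors P_i = |i⟩⟨i|, and let B' = {Π_k}_{k=1}^r be a complete family of orthogonal projectors on ℂ^d (Π_k = Π_k†, Π_kΠ_l = δ_{kl}Π_k, ∑_k Π_k = I), with partial dephasing superoperator D_{B'}(X) = ∑_k Π_k X Π_k. Define the d×d matrix Z by Z_{ij} = Tr( ∑_{k=1}^r P_i Π_k P_j Π_k ). Then Z is a real symmetric matrix, and ∑_{i=1}^d ( ⟨D_{B'}(P_i), D_{B'}(P_i)⟩ − ⟨D_B(D_{B'}(P_i)), D_B(D_{B'}(P_i))⟩ ) = Tr[ Z ( I − Z ) ]; in particular, the 2-norm coherence generating power of D_{B'} with respect to B equals (1/(d(d+1))) · Tr[ Z ( I − Z ) ]. -/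
import Mathlib


open Matrix BigOperators

/-- The rank-one projector `|v i⟩⟨v i|`. -/
noncomputable def rankOneProj {d : ℕ} (v : Fin d → (Fin d → ℂ)) (i : Fin d) :
    Matrix (Fin d) (Fin d) ℂ :=
  Matrix.vecMulVec (v i) (star (v i))

/-- The dephasing superoperator `D_B(X) = ∑ i, P_i X P_i`, `P_i = |v i⟩⟨v i|`. -/
noncomputable def dephase {d : ℕ} (v : Fin d → (Fin d → ℂ))
    (X : Matrix (Fin d) (Fin d) ℂ) : Matrix (Fin d) (Fin d) ℂ :=
  ∑ i, rankOneProj v i * X * rankOneProj v i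

/-- The partial dephasing superoperator `D_{B'}(X) = ∑ k, Π_k X Π_k` of a complete family
of orthogonal projectors `{Π_k}`. -/
noncomputable def partialDephase {d r : ℕ} (Q : Fin r → Matrix (Fin d) (Fin d) ℂ)
    (X : Matrix (Fin d) (Fin d) ℂ) : Matrix (Fin d) (Fin d) ℂ :=
  ∑ k, Q k * X * Q k

/-- The matrix `Z_{ij} = Tr(∑ k, P_i Π_k P_j Π_k)`. -/
noncomputable def zMat {d r : ℕ} (v : Fin d → (Fin d → ℂ))
    (Q : Fin r → Matrix (Fin d) (Fin d) ℂ) : Matrix (Fin d) (Fin d) ℂ :=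
  Matrix.of fun i j => (∑ k, rankOneProj v i * Q k * rankOneProj v j * Q k).trace

/- Auxiliary lemmas about `vecMulVec`. -/

lemma CGP.mul_vmv {d : ℕ} (A : Matrix (Fin d) (Fin d) ℂ) (x y : Fin d → ℂ) :
    A * vecMulVec x y = vecMulVec (A *ᵥ x) y := by
  ext a b
  simp [mul_apply, vecMulVec_apply, mulVec, dotProduct, Finset.sum_mul, mul_assoc]

lemma CGP.vmv_mul {d : ℕ} (x y : Fin d → ℂ) (A : Matrix (Fin d) (Fin d) ℂ) :
    vecMulVec x y * A = vecMulVec x (y ᵥ* A) := by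
  ext a b
  simp [mul_apply, vecMulVec_apply, vecMul, dotProduct, Finset.mul_sum, mul_assoc]

lemma CGP.vmv_mul_vmv {d : ℕ} (x y z w : Fin d → ℂ) :
    vecMulVec x y * vecMulVec z w = (y ⬝ᵥ z) • vecMulVec x w := by
  ext a b
  simp [mul_apply, vecMulVec_apply, dotProduct, Finset.sum_mul, Finset.mul_sum]
  exact Finset.sum_congr rfl fun c _ => by ring

lemma CGP.trace_vmv {d : ℕ} (x y : Fin d → ℂ) : (vecMulVec x y).trace = y ⬝ᵥ x := by
  simp [Matrix.trace, vecMulVec_apply, dotProduct, mul_comm]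

lemma CGP.conjT_vmv {d : ℕ} (x y : Fin d → ℂ) :
    (vecMulVec x y)ᴴ = vecMulVec (star y) (star x) := by
  ext a b
  simp [conjTranspose_apply, vecMulVec_apply, mul_comm]

lemma CGP.conj_dp {d : ℕ} (A : Matrix (Fin d) (Fin d) ℂ) (hA : Aᴴ = A) (x y : Fin d → ℂ) :
    (starRingEnd ℂ) (star x ⬝ᵥ A *ᵥ y) = star y ⬝ᵥ A *ᵥ x := by
  have hA' : ∀ a b, (starRingEnd ℂ) (A b a) = A a b := fun a b => by
    conv_rhs => rw [← hA]; simp [conjTranspose_apply]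
  simp only [dotProduct, mulVec, Pi.star_apply, Finset.mul_sum, map_sum, _root_.map_mul]
  rw [Finset.sum_comm]
  refine Finset.sum_congr rfl fun a _ => Finset.sum_congr rfl fun b _ => ?_
  simp only [RCLike.star_def, Complex.conj_conj]
  rw [hA' a b]
  ring

lemma CGP.dp_mul {d : ℕ} (A B : Matrix (Fin d) (Fin d) ℂ) (hA : Aᴴ = A) (x y : Fin d → ℂ) :
    star (A *ᵥ x) ⬝ᵥ (B *ᵥ y) = star x ⬝ᵥ ((A * B) *ᵥ y) := by
  rw [star_mulVec, hA, ← dotProduct_mulVec, mulVec_mulVec]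

/-- **2-norm CGP of a partially dephasing channel.** -/
theorem cgp_partial_dephasing {d r : ℕ}
    (v : Fin d → (Fin d → ℂ))
    (hv : ∀ i j, star (v i) ⬝ᵥ v j = if i = j then 1 else 0)
    (Q : Fin r → Matrix (Fin d) (Fin d) ℂ)
    (hQherm : ∀ k, (Q k)ᴴ = Q k)
    (hQorth : ∀ k l, Q k * Q l = if k = l then Q k else 0)
    (hQsum : ∑ k, Q k = 1) :
    ((∀ i j, (zMat v Q i j).im = 0) ∧ (∀ i j, zMat v Q j i = zMat v Q i j))
    ∧ ∑ i, (((partialDephase Q (rankOneProj v i))ᴴ * partialDephase Q (rankOneProj v i)).trace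
          - ((dephase v (partialDephase Q (rankOneProj v i)))ᴴ *
              dephase v (partialDephase Q (rankOneProj v i))).trace)
        = (zMat v Q * (1 - zMat v Q)).trace := by
  classical
  set c : Fin r → Fin d → Fin d → ℂ := fun k i j => star (v i) ⬝ᵥ ((Q k) *ᵥ v j) with hc
  have hcconj : ∀ k i j, (starRingEnd ℂ) (c k i j) = c k j i := fun k i j =>
    CGP.conj_dp (Q k) (hQherm k) (v i) (v j)
  -- Z entries in terms of c
  have hz : ∀ i j, zMat v Q i j = ∑ k, c k i j * c k j i := by
    intro i j
    show (∑ k, rankOneProj v i * Q k * rankOneProj v j * Q k).trace = _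
    rw [Matrix.trace_sum]
    refine Finset.sum_congr rfl fun k _ => ?_
    rw [rankOneProj, rankOneProj, CGP.vmv_mul, CGP.vmv_mul_vmv, Matrix.smul_mul,
      CGP.vmv_mul, Matrix.trace_smul, CGP.trace_vmv, ← dotProduct_mulVec,
      ← dotProduct_mulVec, smul_eq_mul]
  -- the vectors u k i = Q k *ᵥ v i
  have hu : ∀ k i, star (v i) ᵥ* Q k = star (Q k *ᵥ v i) := by
    intro k i; rw [star_mulVec, hQherm]
  -- partial dephase of P i
  have hDp : ∀ i, partialDephase Q (rankOneProj v i)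
      = ∑ k, vecMulVec (Q k *ᵥ v i) (star (Q k *ᵥ v i)) := by
    intro i
    refine Finset.sum_congr rfl fun k _ => ?_
    rw [rankOneProj, CGP.mul_vmv, CGP.vmv_mul, hu]
  -- orthogonality of the u's
  have huorth : ∀ k l i j, star (Q k *ᵥ v i) ⬝ᵥ (Q l *ᵥ v j)
      = if k = l then c k i j else 0 := by
    intro k l i j
    rw [CGP.dp_mul _ _ (hQherm k), hQorth]
    by_cases h : k = l <;> simp [h, hc]
  -- realness of z
  have him : ∀ i j, (zMat v Q i j).im = 0 := by
    intro i j
    rw [hz, Complex.im_sum]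
    refine Finset.sum_eq_zero fun k _ => ?_
    rw [← hcconj k i j, Complex.mul_conj]
    simp
  have hconjz : ∀ i j, (starRingEnd ℂ) (zMat v Q i j) = zMat v Q i j := by
    intro i j
    rw [Complex.conj_eq_iff_im]
    exact him i j
  have hsymm : ∀ i j, zMat v Q j i = zMat v Q i j := by
    intro i j
    rw [hz, hz]
    exact Finset.sum_congr rfl fun k _ => mul_comm _ _
  -- key 1 : first trace equals Z_{ii}
  have key1 : ∀ i, ((partialDephase Q (rankOneProj v i))ᴴ *
      partialDephase Q (rankOneProj v i)).trace = zMat v Q i i := by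
    intro i
    have hH : (partialDephase Q (rankOneProj v i))ᴴ = partialDephase Q (rankOneProj v i) := by
      rw [hDp, Matrix.conjTranspose_sum]
      exact Finset.sum_congr rfl fun k _ => by rw [CGP.conjT_vmv, star_star]
    rw [hH, hDp, Finset.sum_mul_sum, Matrix.trace_sum]
    rw [hz]
    refine Finset.sum_congr rfl fun k _ => ?_
    rw [Matrix.trace_sum]
    rw [Finset.sum_eq_single k]
    · rw [CGP.vmv_mul_vmv, Matrix.trace_smul, CGP.trace_vmv, huorth]
      simp [smul_eq_mul]
    · intro l _ hl
      rw [CGP.vmv_mul_vmv, Matrix.trace_smul, huorth]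
      simp [Ne.symm hl]
    · intro h; exact absurd (Finset.mem_univ k) h
  -- dephase of the partial dephase
  have hDeph : ∀ i, dephase v (partialDephase Q (rankOneProj v i))
      = ∑ j, zMat v Q i j • rankOneProj v j := by
    intro i
    unfold dephase
    refine Finset.sum_congr rfl fun j _ => ?_
    rw [hDp, Finset.mul_sum, Finset.sum_mul]
    rw [hz]
    rw [Finset.sum_smul]
    refine Finset.sum_congr rfl fun k _ => ?_
    simp only [rankOneProj]
    rw [CGP.vmv_mul_vmv, Matrix.smul_mul, CGP.vmv_mul_vmv, smul_smul]
    have h1 : star (v j) ⬝ᵥ (Q k *ᵥ v i) = c k j i := rfl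
    have h2 : star (Q k *ᵥ v i) ⬝ᵥ v j = c k i j := by
      rw [star_dotProduct]
      exact hcconj k j i
    rw [h1, h2, mul_comm]
  -- key 2 : second trace equals ∑ j Z_{ij}²
  have key2 : ∀ i, ((dephase v (partialDephase Q (rankOneProj v i)))ᴴ *
      dephase v (partialDephase Q (rankOneProj v i))).trace
      = ∑ j, zMat v Q i j * zMat v Q i j := by
    intro i
    rw [hDeph, Matrix.conjTranspose_sum]
    have hterm : ∀ j, (zMat v Q i j • rankOneProj v j)ᴴ = zMat v Q i j • rankOneProj v j := by
      intro j
      simp only [rankOneProj]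
      rw [Matrix.conjTranspose_smul, CGP.conjT_vmv, star_star, RCLike.star_def, hconjz]
    rw [Finset.sum_congr rfl fun j _ => hterm j]
    rw [Finset.sum_mul_sum, Matrix.trace_sum]
    refine Finset.sum_congr rfl fun j _ => ?_
    rw [Matrix.trace_sum, Finset.sum_eq_single j]
    · simp only [rankOneProj]
      rw [Matrix.smul_mul, Matrix.mul_smul, CGP.vmv_mul_vmv]
      rw [smul_smul, smul_smul, Matrix.trace_smul, CGP.trace_vmv, hv]
      simp [smul_eq_mul]
    · intro l _ hl
      simp only [rankOneProj]
      rw [Matrix.smul_mul, Matrix.mul_smul, CGP.vmv_mul_vmv, hv]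
      simp [Ne.symm hl]
    · intro h; exact absurd (Finset.mem_univ j) h
  refine ⟨⟨him, hsymm⟩, ?_⟩
  -- final computation
  have hrhs : (zMat v Q * (1 - zMat v Q)).trace
      = ∑ i, (zMat v Q i i - ∑ j, zMat v Q i j * zMat v Q i j) := by
    have h2 : (zMat v Q * zMat v Q).trace = ∑ i, ∑ j, zMat v Q i j * zMat v Q i j := by
      rw [Matrix.trace]
      refine Finset.sum_congr rfl fun i _ => ?_
      rw [Matrix.diag_apply, Matrix.mul_apply]
      exact Finset.sum_congr rfl fun j _ => by rw [hsymm j i]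
    rw [mul_sub, mul_one, Matrix.trace_sub, Finset.sum_sub_distrib, h2, Matrix.trace]
    simp only [Matrix.diag_apply]
  rw [hrhs]
  exact Finset.sum_congr rfl fun i _ => by rw [key1, key2]
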